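/- arXiv:1811.03724 — 2 statements merged into one kernel-verified Lean document; each statement's English description precedes it below -/
import Mathlib

section
/- If A is a 2N×2N skew-symmetric matrix over a commutative ring, then Pf(A)² = det(A). -/
open Matrix Equiv

/-- The Pfaffian of a `2N × 2N` matrix, via the permutation sum formula. -/
noncomputable def pf {K : Type*} [Field K] {N : ℕ}
    (A : Matrix (Fin (2 * N)) (Fin (2 * N)) K) : K :=
  ((2 ^ N * Nat.factorial N : ℕ) : K)⁻¹ *
    ∑ σ : Equiv.Perm (Fin (2 * N)), ((Equiv.Perm.sign σ : ℤ) : K) *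
      ∏ i : Fin N, A (σ ⟨2 * i.val + 1, by omega⟩) (σ ⟨2 * i.val, by omega⟩)

namespace PfAux

open Equiv.Perm Finset

variable {K : Type*} [Field K]

/-- The unnormalized Pfaffian sum. -/
def TT {N : ℕ} (A : Matrix (Fin (2 * N)) (Fin (2 * N)) K) : K :=
  ∑ σ : Equiv.Perm (Fin (2 * N)), ((Equiv.Perm.sign σ : ℤ) : K) *
      ∏ i : Fin N, A (σ ⟨2 * i.val + 1, by omega⟩) (σ ⟨2 * i.val, by omega⟩)

/-- Pairing equivalence `Fin N × Fin 2 ≃ Fin (2*N)`. -/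
def pairE (N : ℕ) : Fin N × Fin 2 ≃ Fin (2 * N) where
  toFun x := ⟨2 * x.1.val + x.2.val, by omega⟩
  invFun j := (⟨j.val / 2, by omega⟩, ⟨j.val % 2, by omega⟩)
  left_inv := by
    rintro ⟨⟨i, hi⟩, ⟨b, hb⟩⟩
    have h1 : (2 * i + b) / 2 = i := by omega
    have h2 : (2 * i + b) % 2 = b := by omega
    simp [Prod.ext_iff, Fin.ext_iff, h1, h2]
  right_inv := by
    rintro ⟨j, hj⟩
    simp [Fin.ext_iff]
    omega

@[simp] lemma pairE_zero {N : ℕ} (i : Fin N) :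
    pairE N (i, 0) = ⟨2 * i.val, by omega⟩ := by simp [pairE, Fin.ext_iff]

@[simp] lemma pairE_one {N : ℕ} (i : Fin N) :
    pairE N (i, 1) = ⟨2 * i.val + 1, by omega⟩ := by simp [pairE, Fin.ext_iff]

lemma prod_split {M : Type*} [CommMonoid M] {N : ℕ} (h : Fin (2 * N) → M) :
    ∏ j, h j = ∏ i : Fin N, (h (pairE N (i, 0)) * h (pairE N (i, 1))) := by
  rw [← (pairE N).prod_comp h, Fintype.prod_prod_type]
  exact Finset.prod_congr rfl fun i _ => by rw [Fin.prod_univ_two]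

lemma TT_eq {N : ℕ} (A : Matrix (Fin (2 * N)) (Fin (2 * N)) K) :
    TT A = ∑ σ : Equiv.Perm (Fin (2 * N)), ((Equiv.Perm.sign σ : ℤ) : K) *
      ∏ i : Fin N, A (σ (pairE N (i, 1))) (σ (pairE N (i, 0))) := by
  simp [TT]

lemma sign_sq (π : Equiv.Perm (Fin (2 * N))) :
    ((Equiv.Perm.sign π : ℤ) : K) * ((Equiv.Perm.sign π : ℤ) : K) = 1 := by
  rcases Int.units_eq_one_or (Equiv.Perm.sign π) with h | h <;> rw [h] <;> norm_num

lemma TT_submatrix {N : ℕ} (A : Matrix (Fin (2 * N)) (Fin (2 * N)) K)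
    (π : Equiv.Perm (Fin (2 * N))) :
    TT (A.submatrix π π) = ((Equiv.Perm.sign π : ℤ) : K) * TT A := by
  rw [TT_eq, TT_eq, Finset.mul_sum]
  apply Fintype.sum_equiv (Equiv.mulLeft π)
  intro σ
  have hs : ((Equiv.Perm.sign σ : ℤ) : K)
      = ((Equiv.Perm.sign π : ℤ) : K) * ((Equiv.Perm.sign (π * σ) : ℤ) : K) := by
    rw [Equiv.Perm.sign_mul]
    push_cast
    rw [← mul_assoc, sign_sq, one_mul]
  rw [hs]
  simp [Matrix.submatrix_apply, mul_assoc, Equiv.Perm.mul_apply]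

lemma TT_diag {N : ℕ} (d : Fin (2 * N) → K) (A : Matrix (Fin (2 * N)) (Fin (2 * N)) K) :
    TT (diagonal d * A * diagonal d) = (∏ j, d j) * TT A := by
  rw [TT_eq, TT_eq, Finset.mul_sum]
  apply Finset.sum_congr rfl
  intro σ _
  have hent : ∀ x y, (diagonal d * A * diagonal d) x y = d x * A x y * d y := by
    intro x y
    rw [Matrix.mul_diagonal, Matrix.diagonal_mul]
  simp only [hent]
  have : ∏ i : Fin N, (d (σ (pairE N (i, 1))) * A (σ (pairE N (i, 1))) (σ (pairE N (i, 0)))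
      * d (σ (pairE N (i, 0))))
      = (∏ j, d j) * ∏ i : Fin N, A (σ (pairE N (i, 1))) (σ (pairE N (i, 0))) := by
    have h2 : ∀ i : Fin N, d (σ (pairE N (i, 1))) * A (σ (pairE N (i, 1))) (σ (pairE N (i, 0)))
        * d (σ (pairE N (i, 0)))
        = (d (σ (pairE N (i, 0))) * d (σ (pairE N (i, 1))))
          * A (σ (pairE N (i, 1))) (σ (pairE N (i, 0))) := by intro i; ring
    rw [Finset.prod_congr rfl fun i _ => h2 i, Finset.prod_mul_distrib,
      ← prod_split (fun j => d (σ j)), Equiv.prod_comp σ d]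
  rw [this]; ring
def funPairE (N : ℕ) (ι : Type*) : (Fin (2 * N) → ι) ≃ (Fin N → ι × ι) where
  toFun ψ i := (ψ (pairE N (i, 1)), ψ (pairE N (i, 0)))
  invFun φ j := if ((pairE N).symm j).2 = (1 : Fin 2) then (φ ((pairE N).symm j).1).1
    else (φ ((pairE N).symm j).1).2
  left_inv := by
    intro ψ; funext j
    rcases h : (pairE N).symm j with ⟨i, b⟩
    have hj : pairE N (i, b) = j := by rw [← h]; exact (pairE N).apply_symm_apply j
    simp only [h]
    fin_cases b
    · norm_num
      exact congrArg ψ hj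
    · norm_num
      exact congrArg ψ hj
  right_inv := by
    intro φ; funext i
    have h1 : (pairE N).symm (pairE N (i, 1)) = (i, 1) := (pairE N).symm_apply_apply _
    have h0 : (pairE N).symm (pairE N (i, 0)) = (i, 0) := (pairE N).symm_apply_apply _
    simp only [h1, h0]
    norm_num

lemma TT_congr {N : ℕ} (A P : Matrix (Fin (2 * N)) (Fin (2 * N)) K) :
    TT (Pᵀ * A * P) = P.det * TT A := by
  classical
  have hent : ∀ x y, (Pᵀ * A * P) x y
      = ∑ p : Fin (2 * N) × Fin (2 * N), P p.1 x * A p.1 p.2 * P p.2 y := by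
    intro x y
    rw [Fintype.sum_prod_type]
    simp only [Matrix.mul_apply, Matrix.transpose_apply, Finset.sum_mul, mul_assoc]
    rw [Finset.sum_comm]
  rw [TT_eq]
  calc
    (∑ σ : Equiv.Perm (Fin (2 * N)), ((Equiv.Perm.sign σ : ℤ) : K) *
        ∏ i : Fin N, (Pᵀ * A * P) (σ (pairE N (i, 1))) (σ (pairE N (i, 0))))
        = ∑ σ : Equiv.Perm (Fin (2 * N)), ∑ φ : Fin N → (Fin (2 * N) × Fin (2 * N)),
            ((Equiv.Perm.sign σ : ℤ) : K) * ∏ i : Fin N,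
              (P (φ i).1 (σ (pairE N (i, 1))) * A (φ i).1 (φ i).2
                * P (φ i).2 (σ (pairE N (i, 0)))) := by
      refine Finset.sum_congr rfl fun σ _ => ?_
      rw [← Finset.mul_sum]
      congr 1
      simp only [hent]
      rw [Fintype.prod_sum (fun i (p : Fin (2 * N) × Fin (2 * N)) =>
        P p.1 (σ (pairE N (i, 1))) * A p.1 p.2 * P p.2 (σ (pairE N (i, 0))))]
    _ = ∑ φ : Fin N → (Fin (2 * N) × Fin (2 * N)), ∑ σ : Equiv.Perm (Fin (2 * N)),
            ((Equiv.Perm.sign σ : ℤ) : K) * ∏ i : Fin N,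
              (P (φ i).1 (σ (pairE N (i, 1))) * A (φ i).1 (φ i).2
                * P (φ i).2 (σ (pairE N (i, 0)))) := Finset.sum_comm
    _ = ∑ ψ : Fin (2 * N) → Fin (2 * N), ∑ σ : Equiv.Perm (Fin (2 * N)),
            ((Equiv.Perm.sign σ : ℤ) : K) * ∏ i : Fin N,
              (P (ψ (pairE N (i, 1))) (σ (pairE N (i, 1)))
                * A (ψ (pairE N (i, 1))) (ψ (pairE N (i, 0)))
                * P (ψ (pairE N (i, 0))) (σ (pairE N (i, 0)))) :=
      (Equiv.sum_comp (funPairE N (Fin (2 * N))) _).symm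
    _ = ∑ ψ : Fin (2 * N) → Fin (2 * N),
          (∏ i : Fin N, A (ψ (pairE N (i, 1))) (ψ (pairE N (i, 0)))) *
            ∑ σ : Equiv.Perm (Fin (2 * N)), ((Equiv.Perm.sign σ : ℤ) : K) *
              ∏ j, P (ψ j) (σ j) := by
      refine Finset.sum_congr rfl fun ψ _ => ?_
      rw [Finset.mul_sum]
      refine Finset.sum_congr rfl fun σ _ => ?_
      have h : ∏ i : Fin N, (P (ψ (pairE N (i, 1))) (σ (pairE N (i, 1)))
              * A (ψ (pairE N (i, 1))) (ψ (pairE N (i, 0)))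
              * P (ψ (pairE N (i, 0))) (σ (pairE N (i, 0))))
          = (∏ i : Fin N, A (ψ (pairE N (i, 1))) (ψ (pairE N (i, 0)))) *
              ∏ j, P (ψ j) (σ j) := by
        rw [prod_split (fun j => P (ψ j) (σ j)), ← Finset.prod_mul_distrib]
        exact Finset.prod_congr rfl fun i _ => by ring
      rw [h]; ring
    _ = ∑ ψ : Fin (2 * N) → Fin (2 * N),
          (∏ i : Fin N, A (ψ (pairE N (i, 1))) (ψ (pairE N (i, 0)))) *
            (P.submatrix ψ id).det := by
      refine Finset.sum_congr rfl fun ψ _ => ?_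
      congr 1
      rw [Matrix.det_apply']
      refine Fintype.sum_equiv (Equiv.inv (Equiv.Perm (Fin (2 * N)))) _ _ fun σ => ?_
      simp only [Equiv.inv_apply]
      have hp := Equiv.prod_comp (σ : Fin (2 * N) ≃ Fin (2 * N))
        (fun j => P (ψ (σ⁻¹ j)) j)
      simp only [show ∀ j, σ⁻¹ (σ j) = j from fun j => σ.symm_apply_apply j] at hp
      rw [Equiv.Perm.sign_inv, hp]
      simp [Matrix.submatrix_apply]
    _ = ∑ ψ ∈ Finset.univ.filter
          (fun ψ : Fin (2 * N) → Fin (2 * N) => Function.Bijective ψ),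
          (∏ i : Fin N, A (ψ (pairE N (i, 1))) (ψ (pairE N (i, 0)))) *
            (P.submatrix ψ id).det := by
      refine (Finset.sum_subset (Finset.filter_subset _ _) fun ψ _ hbij => ?_).symm
      have hni : ¬ Function.Injective ψ := fun hinj =>
        hbij (Finset.mem_filter.2 ⟨Finset.mem_univ _,
          Finite.injective_iff_bijective.1 hinj⟩)
      rw [Function.Injective] at hni; push_neg at hni
      obtain ⟨a, b, hab, hne⟩ := hni
      have hz : (P.submatrix ψ id).det = 0 :=
        Matrix.det_zero_of_row_eq hne (by funext c; simp [Matrix.submatrix_apply, hab])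
      rw [hz, mul_zero]
    _ = ∑ μ : Equiv.Perm (Fin (2 * N)),
          (∏ i : Fin N, A (μ (pairE N (i, 1))) (μ (pairE N (i, 0)))) *
            (P.submatrix μ id).det :=
      Finset.sum_bij (fun ψ h => Equiv.ofBijective ψ (Finset.mem_filter.1 h).2)
        (fun _ _ => Finset.mem_univ _) (fun _ _ _ _ h => by injection h)
        (fun μ _ => ⟨μ, Finset.mem_filter.2 ⟨Finset.mem_univ _, μ.bijective⟩,
          Equiv.coe_fn_injective rfl⟩) (fun _ _ => rfl)
    _ = P.det * TT A := by
      rw [TT_eq, Finset.mul_sum]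
      refine Finset.sum_congr rfl fun μ _ => ?_
      rw [Matrix.det_permute]
      ring

lemma pairE_cases {n : ℕ} (j : Fin (2 * n)) : ∃ i b, j = pairE n (i, b) :=
  ⟨((pairE n).symm j).1, ((pairE n).symm j).2, by simp⟩

/-- Permutation of `Fin (2*n)` permuting the pairs according to `ρ`. -/
def bp {n : ℕ} (ρ : Equiv.Perm (Fin n)) : Equiv.Perm (Fin (2 * n)) :=
  (pairE n).permCongr (Equiv.prodCongrLeft (fun _ : Fin 2 => ρ))

lemma bp_apply {n : ℕ} (ρ : Equiv.Perm (Fin n)) (i : Fin n) (b : Fin 2) :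
    bp ρ (pairE n (i, b)) = pairE n (ρ i, b) := by
  simp [bp, Equiv.permCongr_apply, Equiv.prodCongrLeft_apply]

lemma bp_mul {n : ℕ} (ρ ρ' : Equiv.Perm (Fin n)) :
    bp (ρ * ρ') = bp ρ * bp ρ' := by
  apply Equiv.ext
  intro x
  obtain ⟨i, b, rfl⟩ := pairE_cases x
  simp [bp_apply, Equiv.Perm.mul_apply]

lemma bp_one {n : ℕ} : bp (1 : Equiv.Perm (Fin n)) = 1 := by
  apply Equiv.ext
  intro x
  obtain ⟨i, b, rfl⟩ := pairE_cases x
  simp [bp_apply]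

lemma sign_bp {n : ℕ} (ρ : Equiv.Perm (Fin n)) : Equiv.Perm.sign (bp ρ) = 1 := by
  rw [bp, Equiv.Perm.sign_permCongr, Equiv.Perm.sign_prodCongrLeft, Finset.prod_const]
  simp [sq (a := Equiv.Perm.sign ρ) ▸ Int.units_sq (Equiv.Perm.sign ρ)]

/-- Splitting equivalence for a `2 + 2*N` index set. -/
def qE (N : ℕ) : Fin (2 * (N + 1)) ≃ (Fin 2 ⊕ Fin (2 * N)) where
  toFun j := if h : (j : ℕ) < 2 then Sum.inl ⟨j, h⟩ else Sum.inr ⟨(j : ℕ) - 2, by omega⟩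
  invFun x := Sum.elim (fun a => ⟨a.val, by omega⟩) (fun t => ⟨t.val + 2, by omega⟩) x
  left_inv := by
    rintro ⟨j, hj⟩
    dsimp only
    by_cases h : j < 2
    · rw [dif_pos h]
      rfl
    · rw [dif_neg h]
      simp [Fin.ext_iff]
      omega
  right_inv := by
    rintro (⟨a, ha⟩ | ⟨t, ht⟩)
    · dsimp only [Sum.elim_inl]
      rw [dif_pos ha]
    · dsimp only [Sum.elim_inr]
      rw [dif_neg (by omega : ¬ (t + 2) < 2)]
      simp [Fin.ext_iff]

lemma qE_symm_inl {N : ℕ} (a : Fin 2) :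
    (qE N).symm (Sum.inl a) = ⟨a.val, by omega⟩ := rfl

lemma qE_symm_inr {N : ℕ} (t : Fin (2 * N)) :
    (qE N).symm (Sum.inr t) = ⟨t.val + 2, by omega⟩ := rfl

lemma perm_sum_decomp {α β : Type*} [Finite α] (σ : Equiv.Perm (α ⊕ β))
    (h : ∀ a : α, ∃ a', σ (Sum.inl a) = Sum.inl a') :
    ∃ (p : Equiv.Perm α) (q : Equiv.Perm β), σ = Equiv.sumCongr p q := by
  choose f hf using h
  have hfinj : Function.Injective f := by
    intro a b hab
    have h1 : σ (Sum.inl a) = σ (Sum.inl b) := by rw [hf a, hf b, hab]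
    exact Sum.inl_injective (σ.injective h1)
  have hfbij := Finite.injective_iff_bijective.1 hfinj
  have hg : ∀ b : β, ∃ b', σ (Sum.inr b) = Sum.inr b' := by
    intro b
    cases hx : σ (Sum.inr b) with
    | inl a' =>
      obtain ⟨a, rfl⟩ := hfbij.2 a'
      exact absurd (σ.injective (hx.trans (hf a).symm)) (by simp)
    | inr b' => exact ⟨b', rfl⟩
  choose g hgf using hg
  have hginj : Function.Injective g := fun a b hab =>
    Sum.inr_injective (σ.injective (by rw [hgf a, hgf b, hab]))
  have hgsurj : Function.Surjective g := by
    intro b'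
    cases hx : σ.symm (Sum.inr b') with
    | inl a =>
      exfalso
      have h2 := hf a
      rw [← hx, Equiv.apply_symm_apply] at h2
      simp at h2
    | inr b =>
      refine ⟨b, ?_⟩
      have h3 : σ (Sum.inr b) = Sum.inr b' := by rw [← hx, Equiv.apply_symm_apply]
      rw [hgf b] at h3
      exact Sum.inr_injective h3
  refine ⟨Equiv.ofBijective f hfbij, Equiv.ofBijective g ⟨hginj, hgsurj⟩, Equiv.ext ?_⟩
  rintro (a | b) <;> simp [hf, hgf, Equiv.ofBijective]

lemma one_ne_swap01 : (1 : Equiv.Perm (Fin 2)) ≠ Equiv.swap 0 1 := by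
  intro h
  have h0 := (Equiv.ext_iff.mp h) 0
  simp [Equiv.swap_apply_left] at h0

lemma univ_perm_fin_two :
    (Finset.univ : Finset (Equiv.Perm (Fin 2))) = {1, Equiv.swap 0 1} := by
  symm
  apply Finset.eq_of_subset_of_card_le (Finset.subset_univ _)
  rw [Finset.card_univ, Fintype.card_perm, Fintype.card_fin]
  rw [Finset.card_insert_of_notMem (by simp [one_ne_swap01]), Finset.card_singleton]
  decide

lemma qE_apply {N : ℕ} (j : Fin (2 * (N + 1))) :
    qE N j = if h : (j : ℕ) < 2 then Sum.inl ⟨j, h⟩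
      else Sum.inr ⟨(j : ℕ) - 2, by omega⟩ := rfl

lemma bp_inv {n : ℕ} (ρ : Equiv.Perm (Fin n)) : (bp ρ)⁻¹ = bp ρ⁻¹ := by
  apply inv_eq_of_mul_eq_one_right
  rw [← bp_mul]
  simp [bp_one]

lemma pairE_symm_apply {n : ℕ} (j : Fin (2 * n)) :
    (pairE n).symm j = (⟨(j : ℕ) / 2, by omega⟩, ⟨(j : ℕ) % 2, by omega⟩) := rfl

lemma TT_block {N : ℕ} (B : Matrix (Fin (2 * N)) (Fin (2 * N)) K) :
    TT ((Matrix.fromBlocks (!![0, -1; 1, 0] : Matrix (Fin 2) (Fin 2) K) 0 0 B).submatrix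
        (qE N) (qE N)) = (2 * ((N : K) + 1)) * TT B := by
  classical
  set E : Matrix (Fin 2) (Fin 2) K := !![0, -1; 1, 0] with hE
  set D : Matrix (Fin (2 * (N + 1))) (Fin (2 * (N + 1))) K :=
    (Matrix.fromBlocks E 0 0 B).submatrix (qE N) (qE N) with hDdef
  set F : Equiv.Perm (Fin (2 * (N + 1))) → K := fun σ =>
    ((Equiv.Perm.sign σ : ℤ) : K) *
      ∏ i : Fin (N + 1), D (σ (pairE (N + 1) (i, 1))) (σ (pairE (N + 1) (i, 0))) with hF
  set pidx : Equiv.Perm (Fin (2 * (N + 1))) → Fin (N + 1) := fun σ =>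
    ((pairE (N + 1)).symm (σ⁻¹ ⟨0, by omega⟩)).1 with hpidx
  have hTT : TT D = ∑ σ, F σ := by rw [TT_eq]
  -- fiber decomposition
  have hfib : ∑ σ, F σ = ∑ i₀ : Fin (N + 1),
      ∑ σ ∈ Finset.univ.filter (fun σ => pidx σ = i₀), F σ :=
    (Finset.sum_fiberwise _ _ _).symm
  -- each fiber equals fiber 0
  have hWpidx : ∀ (i₀ : Fin (N + 1)) (σ : Equiv.Perm (Fin (2 * (N + 1)))),
      pidx (σ * bp (Equiv.swap 0 i₀)) = Equiv.swap 0 i₀ (pidx σ) := by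
    intro i₀ σ
    have h1 : (σ * bp (Equiv.swap 0 i₀))⁻¹ ⟨0, by omega⟩
        = bp (Equiv.swap 0 i₀) (σ⁻¹ ⟨0, by omega⟩) := by
      rw [_root_.mul_inv_rev, Equiv.Perm.mul_apply, bp_inv, Equiv.swap_inv]
    set y : Fin (2 * (N + 1)) := σ⁻¹ ⟨0, by omega⟩ with hy
    have h2 : y = pairE (N + 1) (((pairE (N + 1)).symm y).1, ((pairE (N + 1)).symm y).2) := by
      simp
    simp only [hpidx, h1]
    conv_lhs => rw [h2, bp_apply]
    rw [Equiv.symm_apply_apply]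
  have hWF : ∀ (i₀ : Fin (N + 1)) (σ : Equiv.Perm (Fin (2 * (N + 1)))),
      F (σ * bp (Equiv.swap 0 i₀)) = F σ := by
    intro i₀ σ
    simp only [hF]
    have hsgn : Equiv.Perm.sign (σ * bp (Equiv.swap 0 i₀)) = Equiv.Perm.sign σ := by
      rw [Equiv.Perm.sign_mul, sign_bp, mul_one]
    rw [hsgn]
    congr 1
    have hterm : ∀ (i : Fin (N + 1)) (b : Fin 2),
        (σ * bp (Equiv.swap 0 i₀)) (pairE (N + 1) (i, b))
          = σ (pairE (N + 1) (Equiv.swap 0 i₀ i, b)) := by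
      intro i b
      rw [Equiv.Perm.mul_apply, bp_apply]
    simp only [hterm]
    exact Equiv.prod_comp (Equiv.swap 0 i₀)
      (fun i => D (σ (pairE (N + 1) (i, 1))) (σ (pairE (N + 1) (i, 0))))
  have hfib0 : ∀ i₀ : Fin (N + 1),
      ∑ σ ∈ Finset.univ.filter (fun σ => pidx σ = i₀), F σ
        = ∑ σ ∈ Finset.univ.filter (fun σ => pidx σ = 0), F σ := by
    intro i₀
    have hWW : ∀ σ : Equiv.Perm (Fin (2 * (N + 1))),
        σ * bp (Equiv.swap 0 i₀) * bp (Equiv.swap 0 i₀) = σ := by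
      intro σ
      rw [mul_assoc, ← bp_mul, Equiv.swap_mul_self, bp_one, mul_one]
    refine Finset.sum_nbij' (fun σ => σ * bp (Equiv.swap 0 i₀))
      (fun σ => σ * bp (Equiv.swap 0 i₀)) ?_ ?_ ?_ ?_ ?_
    · intro σ hσ
      rw [Finset.mem_filter] at hσ ⊢
      refine ⟨Finset.mem_univ _, ?_⟩
      rw [hWpidx, hσ.2, Equiv.swap_apply_right]
    · intro σ hσ
      rw [Finset.mem_filter] at hσ ⊢
      refine ⟨Finset.mem_univ _, ?_⟩
      rw [hWpidx, hσ.2, Equiv.swap_apply_left]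
    · intro σ _; exact hWW σ
    · intro σ _; exact hWW σ
    · intro σ _; exact (hWF i₀ σ).symm
  -- the Λ parametrization of fiber 0
  set lam : Equiv.Perm (Fin 2) × Equiv.Perm (Fin (2 * N)) → Equiv.Perm (Fin (2 * (N + 1))) :=
    fun pr => (qE N).symm.permCongr (Equiv.sumCongr pr.1 pr.2) with hlam
  have hlam_apply : ∀ pr (x : Fin (2 * (N + 1))),
      lam pr x = (qE N).symm (Equiv.sumCongr pr.1 pr.2 (qE N x)) := by
    intro pr x
    simp [hlam, Equiv.permCongr_apply]
  have hq0 : qE N ⟨0, by omega⟩ = Sum.inl 0 := rfl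
  have hq1 : qE N ⟨1, by omega⟩ = Sum.inl 1 := rfl
  have hp00 : pairE (N + 1) ((0 : Fin (N + 1)), (0 : Fin 2)) = ⟨0, by omega⟩ := by
    simp [pairE, Fin.ext_iff]
  have hp01 : pairE (N + 1) ((0 : Fin (N + 1)), (1 : Fin 2)) = ⟨1, by omega⟩ := by
    simp [pairE, Fin.ext_iff]
  have hqsucc : ∀ (i : Fin N) (b : Fin 2),
      qE N (pairE (N + 1) (i.succ, b)) = Sum.inr (pairE N (i, b)) := by
    intro i b
    rw [qE_apply]
    rw [dif_neg (by simp [pairE]; omega)]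
    simp [pairE, Fin.ext_iff]
    omega
  have hlam_sign : ∀ pr : Equiv.Perm (Fin 2) × Equiv.Perm (Fin (2 * N)),
      ((Equiv.Perm.sign (lam pr) : ℤ) : K)
        = ((Equiv.Perm.sign pr.1 : ℤ) : K) * ((Equiv.Perm.sign pr.2 : ℤ) : K) := by
    intro pr
    have h1 : Equiv.Perm.sign (lam pr) = Equiv.Perm.sign pr.1 * Equiv.Perm.sign pr.2 := by
      simp [hlam, Equiv.Perm.sign_permCongr, Equiv.Perm.sign_sumCongr]
    rw [h1]
    push_cast
    ring
  have hFlam : ∀ pr : Equiv.Perm (Fin 2) × Equiv.Perm (Fin (2 * N)),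
      F (lam pr) = (((Equiv.Perm.sign pr.1 : ℤ) : K) * E (pr.1 1) (pr.1 0))
        * (((Equiv.Perm.sign pr.2 : ℤ) : K)
          * ∏ i : Fin N, B (pr.2 (pairE N (i, 1))) (pr.2 (pairE N (i, 0)))) := by
    intro pr
    simp only [hF]
    have hfst : D (lam pr (pairE (N + 1) ((0 : Fin (N + 1)), 1)))
        (lam pr (pairE (N + 1) ((0 : Fin (N + 1)), 0))) = E (pr.1 1) (pr.1 0) := by
      rw [hp01, hp00, hlam_apply, hlam_apply, hq0, hq1]
      simp [hDdef, Matrix.submatrix_apply]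
    have hsnd : ∀ i : Fin N,
        D (lam pr (pairE (N + 1) (i.succ, 1))) (lam pr (pairE (N + 1) (i.succ, 0)))
          = B (pr.2 (pairE N (i, 1))) (pr.2 (pairE N (i, 0))) := by
      intro i
      rw [hlam_apply, hlam_apply, hqsucc, hqsucc]
      simp [hDdef, Matrix.submatrix_apply]
    rw [Fin.prod_univ_succ, hfst, Finset.prod_congr rfl fun i _ => hsnd i, hlam_sign]
    ring
  have hlam_inv : ∀ pr : Equiv.Perm (Fin 2) × Equiv.Perm (Fin (2 * N)),
      (lam pr)⁻¹ = lam (pr.1⁻¹, pr.2⁻¹) := by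
    intro pr
    apply inv_eq_of_mul_eq_one_right
    apply Equiv.ext; intro x
    rw [Equiv.Perm.mul_apply, hlam_apply, hlam_apply]
    simp only [Equiv.sumCongr_apply, Equiv.apply_symm_apply, Sum.map_map]
    have h1 : (⇑pr.1 ∘ ⇑pr.1⁻¹) = id := by funext z; simp
    have h2 : (⇑pr.2 ∘ ⇑pr.2⁻¹) = id := by funext z; simp
    rw [h1, h2, Sum.map_id_id, id_eq]
    exact (qE N).symm_apply_apply x
  have hsum0 : ∑ σ ∈ Finset.univ.filter (fun σ => pidx σ = 0), F σ
      = ∑ pr : Equiv.Perm (Fin 2) × Equiv.Perm (Fin (2 * N)), F (lam pr) := by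
    symm
    refine Finset.sum_bij_ne_zero (fun pr _ _ => lam pr) ?_ ?_ ?_ ?_
    · intro pr _ _
      rw [Finset.mem_filter]
      refine ⟨Finset.mem_univ _, ?_⟩
      simp only [hpidx]
      rw [hlam_inv, hlam_apply, hq0]
      simp only [Equiv.sumCongr_apply, Sum.map_inl]
      rw [qE_symm_inl, pairE_symm_apply]
      have hlt : ((pr.1⁻¹ : Equiv.Perm (Fin 2)) 0).val < 2 := Fin.isLt _
      exact Fin.ext (by simp; omega)
    · intro pr1 _ _ pr2 _ _ hq0'
      have hq : lam pr1 = lam pr2 := hq0'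
      have hcomp : ∀ (pr : Equiv.Perm (Fin 2) × Equiv.Perm (Fin (2 * N))) (z : Fin 2 ⊕ Fin (2 * N)),
          lam pr ((qE N).symm z) = (qE N).symm (Equiv.sumCongr pr.1 pr.2 z) := by
        intro pr z
        rw [hlam_apply, Equiv.apply_symm_apply]
      have hfst : pr1.1 = pr2.1 := by
        apply Equiv.ext; intro a
        have h1 : lam pr1 ((qE N).symm (Sum.inl a)) = lam pr2 ((qE N).symm (Sum.inl a)) := by
          rw [hq]
        rw [hcomp pr1, hcomp pr2] at h1
        have h2 := (qE N).symm.injective h1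
        simpa using h2
      have hsnd2 : pr1.2 = pr2.2 := by
        apply Equiv.ext; intro t
        have h1 : lam pr1 ((qE N).symm (Sum.inr t)) = lam pr2 ((qE N).symm (Sum.inr t)) := by
          rw [hq]
        rw [hcomp pr1, hcomp pr2] at h1
        have h2 := (qE N).symm.injective h1
        simpa using h2
      exact Prod.ext hfst hsnd2
    · intro σ hσ hFne
      rw [Finset.mem_filter] at hσ
      have hylt : ((σ⁻¹ (⟨0, by omega⟩ : Fin (2 * (N + 1)))) : Fin (2 * (N + 1))).val < 2 := by
        have h := hσ.2
        simp only [hpidx, pairE_symm_apply] at h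
        have h2 : ((σ⁻¹ (⟨0, by omega⟩ : Fin (2 * (N + 1)))).val) / 2 = 0 :=
          congrArg Fin.val h
        omega
      have hprodne : ∀ i : Fin (N + 1),
          D (σ (pairE (N + 1) (i, 1))) (σ (pairE (N + 1) (i, 0))) ≠ 0 := by
        have hp : (∏ i : Fin (N + 1),
            D (σ (pairE (N + 1) (i, 1))) (σ (pairE (N + 1) (i, 0)))) ≠ 0 := by
          intro h0
          exact hFne (by simp only [hF]; rw [h0, mul_zero])
        exact fun i => Finset.prod_ne_zero_iff.mp hp i (Finset.mem_univ i)
      have h0fac := hprodne 0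
      rw [hp01, hp00] at h0fac
      have hinl : ∀ a : Fin 2, ∃ a', qE N (σ ((qE N).symm (Sum.inl a))) = Sum.inl a' := by
        have hy2 : σ⁻¹ ⟨0, by omega⟩ = (⟨0, by omega⟩ : Fin (2 * (N + 1)))
            ∨ σ⁻¹ ⟨0, by omega⟩ = (⟨1, by omega⟩ : Fin (2 * (N + 1))) := by
          have h01 : (σ⁻¹ (⟨0, by omega⟩ : Fin (2 * (N + 1)))).val = 0
              ∨ (σ⁻¹ (⟨0, by omega⟩ : Fin (2 * (N + 1)))).val = 1 := by omega
          rcases h01 with h | h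
          · exact Or.inl (Fin.ext h)
          · exact Or.inr (Fin.ext h)
        intro a
        rcases hy2 with hy | hy
        · -- σ ⟨0⟩ = ⟨0⟩
          have hs0 : σ ⟨0, by omega⟩ = ⟨0, by omega⟩ := by
            conv_lhs => rw [← hy]
            exact σ.apply_symm_apply _
          have hs1 : ∃ a', qE N (σ ⟨1, by omega⟩) = Sum.inl a' := by
            cases hc : qE N (σ ⟨1, by omega⟩) with
            | inl a' => exact ⟨a', rfl⟩
            | inr t =>
              exfalso
              apply h0fac
              rw [hDdef]
              simp only [Matrix.submatrix_apply]
              rw [hc, hs0, hq0]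
              simp [Matrix.fromBlocks]
          fin_cases a
          · show ∃ a', qE N (σ ⟨0, by omega⟩) = Sum.inl a'
            exact ⟨0, by rw [hs0, hq0]⟩
          · show ∃ a', qE N (σ ⟨1, by omega⟩) = Sum.inl a'
            exact hs1
        · -- σ ⟨1⟩ = ⟨0⟩
          have hs1 : σ ⟨1, by omega⟩ = ⟨0, by omega⟩ := by
            conv_lhs => rw [← hy]
            exact σ.apply_symm_apply _
          have hs0 : ∃ a', qE N (σ ⟨0, by omega⟩) = Sum.inl a' := by
            cases hc : qE N (σ ⟨0, by omega⟩) with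
            | inl a' => exact ⟨a', rfl⟩
            | inr t =>
              exfalso
              apply h0fac
              rw [hDdef]
              simp only [Matrix.submatrix_apply]
              rw [hc, hs1, hq0]
              simp [Matrix.fromBlocks]
          fin_cases a
          · show ∃ a', qE N (σ ⟨0, by omega⟩) = Sum.inl a'
            exact hs0
          · show ∃ a', qE N (σ ⟨1, by omega⟩) = Sum.inl a'
            exact ⟨0, by rw [hs1, hq0]⟩
      obtain ⟨p, q, hpq⟩ := perm_sum_decomp ((qE N).permCongr σ)
        (by
          intro a
          obtain ⟨a', ha'⟩ := hinl a
          exact ⟨a', by rw [Equiv.permCongr_apply]; exact ha'⟩)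
      have hlameq : lam (p, q) = σ := by
        apply Equiv.ext; intro x
        rw [hlam_apply]
        have hx := Equiv.ext_iff.mp hpq (qE N x)
        rw [Equiv.permCongr_apply, Equiv.symm_apply_apply] at hx
        rw [← hx]
        exact (qE N).symm_apply_apply _
      exact ⟨(p, q), Finset.mem_univ _, by rw [hlameq]; exact hFne, hlameq⟩
    · intro pr _ _
      rfl
  have hsum2 : ∑ pr : Equiv.Perm (Fin 2) × Equiv.Perm (Fin (2 * N)), F (lam pr)
      = 2 * TT B := by
    rw [Fintype.sum_prod_type]
    have hinner : ∀ α : Equiv.Perm (Fin 2), ∑ τ : Equiv.Perm (Fin (2 * N)), F (lam (α, τ))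
        = (((Equiv.Perm.sign α : ℤ) : K) * E (α 1) (α 0)) * TT B := by
      intro α
      rw [TT_eq, Finset.mul_sum]
      refine Finset.sum_congr rfl fun τ _ => ?_
      rw [hFlam]
    simp only [hinner]
    rw [← Finset.sum_mul]
    have h2 : ∑ α : Equiv.Perm (Fin 2), ((Equiv.Perm.sign α : ℤ) : K) * E (α 1) (α 0)
        = 2 := by
      rw [univ_perm_fin_two, Finset.sum_insert (by simp [one_ne_swap01]),
        Finset.sum_singleton]
      have hsw : Equiv.Perm.sign (Equiv.swap (0 : Fin 2) 1) = -1 :=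
        Equiv.Perm.sign_swap (by decide)
      rw [hsw]
      simp [hE, Equiv.swap_apply_left, Equiv.swap_apply_right]
      norm_num
    rw [h2]
  rw [hTT, hfib, Finset.sum_congr rfl (fun i₀ _ => hfib0 i₀), Finset.sum_const,
    Finset.card_univ, Fintype.card_fin, hsum0, hsum2, nsmul_eq_mul]
  push_cast
  ring
lemma skew_diag [CharZero K] {n : Type*} (A : Matrix n n K) (hA : Aᵀ = -A) (x : n) :
    A x x = 0 := by
  have h1 : A x x = -A x x := by
    have h := congrFun (congrFun hA x) x
    simpa [Matrix.transpose_apply, Matrix.neg_apply] using h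
  have h2 : (2 : K) * A x x = 0 := by linear_combination h1
  rcases mul_eq_zero.mp h2 with h | h
  · exact absurd h two_ne_zero
  · exact h

lemma Emul : (!![0, -1; 1, 0] : Matrix (Fin 2) (Fin 2) K) * !![0, -1; 1, 0] = -1 := by
  ext i j
  fin_cases i <;> fin_cases j <;>
    simp [Matrix.mul_apply, Fin.sum_univ_two, Matrix.one_apply]
lemma Etrans : (!![0, -1; 1, 0] : Matrix (Fin 2) (Fin 2) K)ᵀ
    = -(!![0, -1; 1, 0] : Matrix (Fin 2) (Fin 2) K) := by
  ext i j
  fin_cases i <;> fin_cases j <;> simp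

lemma TT_sq [CharZero K] {N : ℕ} (A : Matrix (Fin (2 * N)) (Fin (2 * N)) K)
    (hA : Aᵀ = -A) :
    TT A ^ 2 = (((2 ^ N * Nat.factorial N : ℕ) : K)) ^ 2 * A.det := by
  induction N with
  | zero =>
    have hone : ∀ σ : Equiv.Perm (Fin (2 * 0)), σ = 1 :=
      fun σ => Equiv.ext fun x => absurd x.2 (by omega)
    have hTT : TT A = 1 := by
      rw [TT]
      have hterm : ∀ σ : Equiv.Perm (Fin (2 * 0)), ((Equiv.Perm.sign σ : ℤ) : K) *
          ∏ i : Fin 0, A (σ ⟨2 * i.val + 1, by omega⟩) (σ ⟨2 * i.val, by omega⟩)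
            = 1 := by
        intro σ
        rw [hone σ]
        simp
      rw [Finset.sum_congr rfl (fun σ _ => hterm σ), Finset.sum_const,
        Finset.card_univ]
      have hcard : Fintype.card (Equiv.Perm (Fin (2 * 0))) = 1 := by
        rw [Fintype.card_perm, Fintype.card_fin]
        rfl
      rw [hcard, one_smul]
    have hdet : A.det = 1 := by
      have : IsEmpty (Fin (2 * 0)) := ⟨fun x => absurd x.2 (by omega)⟩
      exact Matrix.det_isEmpty
    rw [hTT, hdet]
    norm_num
  | succ N ih =>
    by_cases hA0 : A = 0
    · have hTT : TT A = 0 := by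
        rw [hA0, TT]
        apply Finset.sum_eq_zero
        intro σ _
        rw [Finset.prod_eq_zero (Finset.mem_univ (0 : Fin (N + 1)))
          (by simp [Matrix.zero_apply])]
        ring
      have hdet : A.det = 0 := by
        rw [hA0]
        haveI : Nonempty (Fin (2 * (N + 1))) := ⟨⟨0, by omega⟩⟩
        exact Matrix.det_zero
      rw [hTT, hdet]
      ring
    · obtain ⟨i, j, hij⟩ : ∃ i j, A i j ≠ 0 := by
        by_contra h
        push_neg at h
        exact hA0 (Matrix.ext fun i j => h i j)
      have hne : i ≠ j := fun h => hij (h ▸ skew_diag A hA i)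
      -- a permutation with π 0 = i and π 1 = j
      set z0 : Fin (2 * (N + 1)) := ⟨0, by omega⟩ with hz0
      set z1 : Fin (2 * (N + 1)) := ⟨1, by omega⟩ with hz1
      have hz01 : z0 ≠ z1 := by simp [hz0, hz1, Fin.ext_iff]
      set sw : Equiv.Perm (Fin (2 * (N + 1))) := Equiv.swap z0 i with hsw
      set kk : Fin (2 * (N + 1)) := sw j with hkk
      have hk0 : kk ≠ z0 := by
        simp only [hkk, hsw]
        intro h
        have := congrArg (Equiv.swap z0 i) h
        rw [Equiv.swap_apply_self, Equiv.swap_apply_left] at this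
        exact hne this.symm
      set π : Equiv.Perm (Fin (2 * (N + 1))) := sw * Equiv.swap z1 kk with hπ
      have hπ0 : π z0 = i := by
        rw [hπ, Equiv.Perm.mul_apply,
          Equiv.swap_apply_of_ne_of_ne hz01 (Ne.symm hk0), hsw, Equiv.swap_apply_left]
      have hπ1 : π z1 = j := by
        rw [hπ, Equiv.Perm.mul_apply, Equiv.swap_apply_left, hkk, hsw,
          Equiv.swap_apply_self]
      set A₁ : Matrix (Fin (2 * (N + 1))) (Fin (2 * (N + 1))) K := A.submatrix π π
        with hA₁
      have hA₁skew : A₁ᵀ = -A₁ := by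
        rw [hA₁, Matrix.transpose_submatrix, hA]
        ext x y
        simp [Matrix.submatrix_apply, Matrix.neg_apply]
      have hAji : A j i = -A i j := by
        have h := congrFun (congrFun hA i) j
        simpa [Matrix.transpose_apply, Matrix.neg_apply] using h
      set a : K := A₁ z1 z0 with ha_def
      have ha : a ≠ 0 := by
        rw [ha_def, hA₁]
        simp only [Matrix.submatrix_apply]
        rw [hπ1, hπ0, hAji]
        simpa using hij
      set d : Fin (2 * (N + 1)) → K := fun k => if k = z1 then a⁻¹ else 1 with hd
      set u : K := ∏ k, d k with hu_def
      have hu : u = a⁻¹ := by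
        rw [hu_def, hd, Finset.prod_ite_eq' Finset.univ z1 (fun _ => a⁻¹)]
        simp
      have hune : u ≠ 0 := by rw [hu]; exact inv_ne_zero ha
      set A₂ : Matrix (Fin (2 * (N + 1))) (Fin (2 * (N + 1))) K :=
        diagonal d * A₁ * diagonal d with hA₂
      have hA₂skew : A₂ᵀ = -A₂ := by
        rw [hA₂, Matrix.transpose_mul, Matrix.transpose_mul, Matrix.diagonal_transpose,
          hA₁skew]
        simp only [Matrix.mul_neg, Matrix.neg_mul]
        rw [Matrix.mul_assoc]
      have hA₂10 : A₂ z1 z0 = 1 := by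
        rw [hA₂, Matrix.mul_diagonal, Matrix.diagonal_mul]
        simp only [hd, if_true, eq_self_iff_true, if_neg hz01, ← ha_def]
        field_simp
      have hA₂diag := skew_diag A₂ hA₂skew
      have hA₂01 : A₂ z0 z1 = -1 := by
        have h := congrFun (congrFun hA₂skew z0) z1
        simp only [Matrix.transpose_apply, Matrix.neg_apply] at h
        rw [hA₂10] at h
        linear_combination h

      -- block decomposition
      set A₂' : Matrix (Fin 2 ⊕ Fin (2 * N)) (Fin 2 ⊕ Fin (2 * N)) K :=
        A₂.submatrix (qE N).symm (qE N).symm with hA₂'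
      have hA₂'skew : A₂'ᵀ = -A₂' := by
        rw [hA₂', Matrix.transpose_submatrix, hA₂skew]
        ext x y
        simp [Matrix.submatrix_apply, Matrix.neg_apply]
      set E : Matrix (Fin 2) (Fin 2) K := !![0, -1; 1, 0] with hE
      set X : Matrix (Fin 2) (Fin (2 * N)) K := A₂'.toBlocks₁₂ with hX
      set C : Matrix (Fin (2 * N)) (Fin (2 * N)) K := A₂'.toBlocks₂₂ with hC
      have hentry : ∀ x y, A₂' x y = A₂ ((qE N).symm x) ((qE N).symm y) := by
        intro x y; rw [hA₂']; rfl
      have hblocks : A₂' = Matrix.fromBlocks E X (-Xᵀ) C := by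
        ext x y
        rcases x with p | t <;> rcases y with q1 | t2
        · rw [Matrix.fromBlocks_apply₁₁]
          fin_cases p <;> fin_cases q1
          · simp only [hentry, qE_symm_inl]
            show A₂ z0 z0 = E 0 0
            rw [hA₂diag z0, hE]
            simp
          · simp only [hentry, qE_symm_inl]
            show A₂ z0 z1 = E 0 1
            rw [hA₂01, hE]
            simp
          · simp only [hentry, qE_symm_inl]
            show A₂ z1 z0 = E 1 0
            rw [hA₂10, hE]
            simp
          · simp only [hentry, qE_symm_inl]
            show A₂ z1 z1 = E 1 1
            rw [hA₂diag z1, hE]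
            simp
        · rw [Matrix.fromBlocks_apply₁₂]
          rfl
        · rw [Matrix.fromBlocks_apply₂₁]
          have h := congrFun (congrFun hA₂'skew (Sum.inr t)) (Sum.inl q1)
          simp only [Matrix.transpose_apply, Matrix.neg_apply] at h
          show A₂' (Sum.inr t) (Sum.inl q1) = -A₂' (Sum.inl q1) (Sum.inr t)
          rw [h]
          simp
        · rw [Matrix.fromBlocks_apply₂₂]
          rfl
      set M : Matrix (Fin 2 ⊕ Fin (2 * N)) (Fin 2 ⊕ Fin (2 * N)) K :=
        Matrix.fromBlocks 1 (E * X) 0 1 with hM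
      set B : Matrix (Fin (2 * N)) (Fin (2 * N)) K := C - Xᵀ * E * X with hB
      have hAM : A₂' * M = Matrix.fromBlocks E 0 (-Xᵀ) B := by
        rw [hblocks, hM, Matrix.fromBlocks_multiply]
        have e11 : E * 1 + X * (0 : Matrix (Fin (2 * N)) (Fin 2) K) = E := by simp
        have e12 : E * (E * X) + X * (1 : Matrix (Fin (2 * N)) (Fin (2 * N)) K)
            = 0 := by
          rw [← Matrix.mul_assoc, hE, Emul]
          simp
        have e21 : -Xᵀ * (1 : Matrix (Fin 2) (Fin 2) K)
            + C * (0 : Matrix (Fin (2 * N)) (Fin 2) K) = -Xᵀ := by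
          simp
        have e22 : -Xᵀ * (E * X) + C * (1 : Matrix (Fin (2 * N)) (Fin (2 * N)) K)
            = B := by
          rw [hB]
          simp only [Matrix.neg_mul, Matrix.mul_one, ← Matrix.mul_assoc]
          abel
        rw [e11, e12, e21, e22]
      have hMt : Mᵀ = Matrix.fromBlocks 1 0 (Xᵀ * Eᵀ) 1 := by
        rw [hM, Matrix.fromBlocks_transpose]
        simp [Matrix.transpose_mul]
      have hMAM : Mᵀ * (A₂' * M) = Matrix.fromBlocks E 0 0 B := by
        rw [hAM, hMt, Matrix.fromBlocks_multiply]
        have e11 : 1 * E + (0 : Matrix (Fin 2) (Fin (2 * N)) K) * (-Xᵀ) = E := by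
          simp
        have e12 : (1 : Matrix (Fin 2) (Fin 2) K) * (0 : Matrix (Fin 2) (Fin (2 * N)) K)
            + (0 : Matrix (Fin 2) (Fin (2 * N)) K) * B = 0 := by simp
        have e21 : Xᵀ * Eᵀ * E + (1 : Matrix (Fin (2 * N)) (Fin (2 * N)) K) * (-Xᵀ)
            = 0 := by
          have hEt : Eᵀ = -E := by rw [hE]; exact Etrans
          rw [hEt]
          simp only [Matrix.mul_neg, Matrix.neg_mul, Matrix.one_mul]
          rw [Matrix.mul_assoc, hE, Emul]
          simp
        have e22 : Xᵀ * Eᵀ * (0 : Matrix (Fin 2) (Fin (2 * N)) K)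
            + (1 : Matrix (Fin (2 * N)) (Fin (2 * N)) K) * B = B := by simp
        rw [e11, e12, e21, e22]
      have hdetM : M.det = 1 := by
        rw [hM, Matrix.det_fromBlocks_zero₂₁]
        simp
      have hBskew : Bᵀ = -B := by
        have hskewMAM : (Mᵀ * (A₂' * M))ᵀ = -(Mᵀ * (A₂' * M)) := by
          rw [Matrix.transpose_mul, Matrix.transpose_mul, Matrix.transpose_transpose,
            hA₂'skew]
          simp only [Matrix.mul_neg, Matrix.neg_mul]
          rw [Matrix.mul_assoc]
        rw [hMAM] at hskewMAM
        have h := congrArg Matrix.toBlocks₂₂ hskewMAM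
        rw [Matrix.fromBlocks_transpose] at h
        simpa [Matrix.toBlocks_fromBlocks₂₂, Matrix.fromBlocks_neg] using h
      -- back to Fin indices
      set Pm : Matrix (Fin (2 * (N + 1))) (Fin (2 * (N + 1))) K :=
        M.submatrix (qE N) (qE N) with hPm
      have hA₂sub : A₂'.submatrix (qE N) (qE N) = A₂ := by
        rw [hA₂', Matrix.submatrix_submatrix]
        simp [Equiv.symm_comp_self]
      have hPA : Pmᵀ * A₂ * Pm
          = (Matrix.fromBlocks E 0 0 B).submatrix (qE N) (qE N) := by
        rw [hPm, Matrix.transpose_submatrix, ← hA₂sub,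
          Matrix.submatrix_mul_equiv, Matrix.submatrix_mul_equiv, Matrix.mul_assoc,
          hMAM]
      have hdetPm : Pm.det = 1 := by
        rw [hPm, Matrix.det_submatrix_equiv_self, hdetM]
      -- chain of TT equalities
      have t1 : TT A₁ = ((Equiv.Perm.sign π : ℤ) : K) * TT A := TT_submatrix A π
      have t2 : TT A₂ = u * TT A₁ := TT_diag d A₁
      have t3 : TT ((Matrix.fromBlocks E 0 0 B).submatrix (qE N) (qE N)) = TT A₂ := by
        rw [← hPA, TT_congr, hdetPm, one_mul]
      have t4 : TT ((Matrix.fromBlocks E 0 0 B).submatrix (qE N) (qE N))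
          = (2 * ((N : K) + 1)) * TT B := by
        rw [hE]
        exact TT_block B
      have t5 := ih B hBskew
      -- determinant chain
      have d1 : A₁.det = A.det := by
        rw [hA₁, Matrix.det_submatrix_equiv_self]
      have d2 : A₂.det = u ^ 2 * A.det := by
        rw [hA₂, Matrix.det_mul, Matrix.det_mul, Matrix.det_diagonal, ← hu_def, d1]
        ring
      have d3 : B.det = A₂.det := by
        have hd1 : ((Matrix.fromBlocks E 0 0 B).submatrix (qE N) (qE N)).det
            = B.det := by
          rw [Matrix.det_submatrix_equiv_self, Matrix.det_fromBlocks_zero₂₁]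
          have : E.det = 1 := by rw [hE, Matrix.det_fin_two_of]; norm_num
          rw [this, one_mul]
        rw [← hd1, ← hPA, Matrix.det_mul, Matrix.det_mul, Matrix.det_transpose,
          hdetPm]
        ring
      -- put it together
      have hTTA2 : TT A₂ = (2 * ((N : K) + 1)) * TT B := by rw [← t3, t4]
      have e1 : TT A₁ ^ 2 = TT A ^ 2 := by
        rw [t1, mul_pow]
        have hs := sign_sq (K := K) π
        rw [show ((Equiv.Perm.sign π : ℤ) : K) ^ 2 = 1 from by rw [sq]; exact hs]
        ring
      have e2 : TT A₂ ^ 2 = u ^ 2 * TT A ^ 2 := by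
        rw [t2, mul_pow, e1]
      have e3 : TT A₂ ^ 2 = (2 * ((N : K) + 1)) ^ 2 *
          ((((2 ^ N * Nat.factorial N : ℕ) : K)) ^ 2 * B.det) := by
        rw [hTTA2, mul_pow, t5]
      have key : u ^ 2 * TT A ^ 2 = u ^ 2 *
          ((((2 ^ (N + 1) * Nat.factorial (N + 1) : ℕ) : K)) ^ 2 * A.det) := by
        rw [← e2, e3, d3, d2]
        push_cast [Nat.factorial_succ, pow_succ]
        ring
      exact mul_left_cancel₀ (pow_ne_zero 2 hune) key
end PfAux

/-- For a skew-symmetric matrix `A`, the square of the Pfaffian is the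
determinant: `Pf(A)² = det A`. -/
theorem pf_sq_eq_det {K : Type*} [Field K] [CharZero K] {N : ℕ}
    (A : Matrix (Fin (2 * N)) (Fin (2 * N)) K) (hA : Aᵀ = -A) :
    pf A ^ 2 = A.det := by
  have h := PfAux.TT_sq A hA
  have hc : ((2 ^ N * Nat.factorial N : ℕ) : K) ≠ 0 := by
    rw [Nat.cast_ne_zero]
    exact Nat.mul_ne_zero (pow_ne_zero _ two_ne_zero) (Nat.factorial_ne_zero N)
  have hpf : pf A = ((2 ^ N * Nat.factorial N : ℕ) : K)⁻¹ * PfAux.TT A := rfl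
  rw [hpf, mul_pow, h, ← mul_assoc, ← mul_pow, inv_mul_cancel₀ hc, one_pow, one_mul]
end

section
/- The smallest eigenvalue of the overlap matrix is 1: for an N×N complex matrix G with distinct eigenvalues and overlap matrix 𝒪_{i,j} = A_{i,j}(A⁻¹)_{j,i} with A = P*P (the Hadamard product of A and (Aᵀ)⁻¹), the matrix 𝒪 is Hermitian positive definite and its minimal eigenvalue equals exactly 1. -/
open Matrix Finset
open scoped ComplexOrder

lemma overlap_real_ineq {N : ℕ} (μ : Fin N → ℝ) (hμ : ∀ k, 0 < μ k)
    (c : Fin N → Fin N → ℝ) (hc : ∀ k l, 0 ≤ c k l)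
    (hrc : ∀ k, ∑ l, c k l = ∑ l, c l k) :
    ∑ k, ∑ l, c k l ≤ ∑ k, ∑ l, (μ k / μ l) * c k l := by
  set a : Fin N → ℝ := fun k => Real.log (μ k) with ha
  have zero : ∑ k, ∑ l, (a k - a l) * c k l = 0 := by
    have h1 : ∑ k, ∑ l, (a k - a l) * c k l
        = (∑ k, a k * ∑ l, c k l) - ∑ k, ∑ l, a l * c k l := by
      simp_rw [sub_mul, Finset.sum_sub_distrib, Finset.mul_sum]
    have h2 : ∑ k : Fin N, ∑ l, a l * c k l = ∑ k, a k * ∑ l, c k l := by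
      rw [Finset.sum_comm]
      refine Finset.sum_congr rfl fun l _ => ?_
      rw [← Finset.mul_sum, ← hrc l]
    rw [h1, h2, sub_self]
  have key : ∑ k, ∑ l, (a k - a l + 1) * c k l ≤ ∑ k, ∑ l, (μ k / μ l) * c k l := by
    refine Finset.sum_le_sum fun k _ => Finset.sum_le_sum fun l _ => ?_
    refine mul_le_mul_of_nonneg_right ?_ (hc k l)
    have h1 : Real.log (μ k / μ l) ≤ μ k / μ l - 1 :=
      Real.log_le_sub_one_of_pos (div_pos (hμ k) (hμ l))
    rw [Real.log_div (hμ k).ne' (hμ l).ne'] at h1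
    simp only [ha]; linarith
  refine le_trans (le_of_eq ?_) key
  simp_rw [add_mul, one_mul, Finset.sum_add_distrib, zero, zero_add]

lemma overlap_trace_expand {N : ℕ} (X Y : Matrix (Fin N) (Fin N) ℂ) :
    trace (X * Y) = ∑ i, ∑ j, X i j * Y j i := by
  simp [Matrix.trace, Matrix.diag, Matrix.mul_apply]

lemma overlap_posdef_A {N : ℕ} (P : Matrix (Fin N) (Fin N) ℂ) (hP : IsUnit P.det) :
    (Pᴴ * P).PosDef := by
  refine PosDef.of_dotProduct_mulVec_pos (isHermitian_conjTranspose_mul_self P) fun x hx => ?_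
  rw [← mulVec_mulVec, dotProduct_mulVec, vecMul_conjTranspose, star_star]
  exact dotProduct_star_self_pos_iff.mpr
    (((Matrix.mulVec_injective_iff_isUnit.mpr (isUnit_iff_isUnit_det _ |>.2 hP)).ne_iff'
      (Matrix.mulVec_zero P)).2 hx)

lemma overlap_quad {N : ℕ} (A : Matrix (Fin N) (Fin N) ℂ) (hA : A.PosDef)
    (v : Fin N → ℂ) :
    star v ⬝ᵥ v ≤ star v ⬝ᵥ ((Matrix.of fun i j : Fin N => A i j * A⁻¹ j i) *ᵥ v) := by
  have hAh : A.IsHermitian := hA.1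
  set U : Matrix (Fin N) (Fin N) ℂ := (hAh.eigenvectorUnitary : Matrix (Fin N) (Fin N) ℂ)
    with hUdef
  set μ : Fin N → ℝ := hAh.eigenvalues with hμdef
  have hμpos : ∀ k, 0 < μ k := hA.eigenvalues_pos
  have hU1 : U * star U = 1 := (Matrix.mem_unitaryGroup_iff).mp (hAh.eigenvectorUnitary).2
  have hU2 : star U * U = 1 := (Matrix.mem_unitaryGroup_iff').mp (hAh.eigenvectorUnitary).2
  have hspec : A = U * diagonal (fun k => (μ k : ℂ)) * star U := hAh.spectral_theorem
  have hAinv : A⁻¹ = U * diagonal (fun k => ((μ k : ℂ))⁻¹) * star U := by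
    apply inv_eq_right_inv
    rw [hspec]
    calc U * diagonal (fun k => (μ k : ℂ)) * star U *
          (U * diagonal (fun k => ((μ k : ℂ))⁻¹) * star U)
        = U * (diagonal (fun k => (μ k : ℂ)) * (star U * U) *
            diagonal (fun k => ((μ k : ℂ))⁻¹)) * star U := by
          simp only [Matrix.mul_assoc]
      _ = 1 := by
          rw [hU2, Matrix.mul_one, diagonal_mul_diagonal]
          have h : (fun k => (μ k : ℂ) * ((μ k : ℂ))⁻¹) = fun _ => (1:ℂ) := by
            funext k
            exact mul_inv_cancel₀ (by exact_mod_cast (hμpos k).ne')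
          rw [h, diagonal_one, Matrix.mul_one, hU1]
  set Λ : Matrix (Fin N) (Fin N) ℂ := diagonal (fun k => (μ k : ℂ)) with hΛ
  set Λ' : Matrix (Fin N) (Fin N) ℂ := diagonal (fun k => ((μ k : ℂ))⁻¹) with hΛ'
  set D : Matrix (Fin N) (Fin N) ℂ := diagonal v with hD
  set W : Matrix (Fin N) (Fin N) ℂ := star U * D * U with hW
  have hWc : Wᴴ = star U * Dᴴ * U := by
    rw [hW]
    simp [Matrix.star_eq_conjTranspose, Matrix.conjTranspose_mul, Matrix.mul_assoc]
  have E1 : star v ⬝ᵥ ((Matrix.of fun i j : Fin N => A i j * A⁻¹ j i) *ᵥ v)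
      = trace (Dᴴ * A * D * A⁻¹) := by
    have h : Dᴴ * A * D * A⁻¹ = (Dᴴ * A) * (D * A⁻¹) := by
      rw [Matrix.mul_assoc (Dᴴ * A)]
    rw [h, overlap_trace_expand]
    simp only [dotProduct, mulVec, of_apply, Pi.star_apply, Finset.mul_sum, hD,
      diagonal_conjTranspose, diagonal_mul]
    exact Finset.sum_congr rfl fun i _ => Finset.sum_congr rfl fun j _ => by ring
  have E2 : trace (Dᴴ * A * D * A⁻¹) = trace (Wᴴ * Λ * W * Λ') := by
    rw [hAinv, hspec, hWc]
    have h : Dᴴ * (U * Λ * star U) * D * (U * Λ' * star U)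
        = (Dᴴ * (U * Λ * star U) * D * U * Λ') * star U := by
      simp only [Matrix.mul_assoc]
    rw [h, trace_mul_comm]
    rw [hW]
    simp only [Matrix.mul_assoc]
  have E3 : trace (Wᴴ * Λ * W * Λ')
      = ∑ k, ∑ l, (μ l : ℂ) * ((μ k : ℂ))⁻¹ * (star (W l k) * W l k) := by
    have h : Wᴴ * Λ * W * Λ' = (Wᴴ * Λ) * (W * Λ') := by
      rw [Matrix.mul_assoc (Wᴴ * Λ)]
    rw [h, overlap_trace_expand]
    simp only [hΛ, hΛ', mul_diagonal, conjTranspose_apply]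
    exact Finset.sum_congr rfl fun k _ => Finset.sum_congr rfl fun l _ => by ring
  have h1 : Wᴴ * W = star U * (Dᴴ * D) * U := by
    rw [hWc, hW]
    calc star U * Dᴴ * U * (star U * D * U)
        = star U * Dᴴ * (U * star U) * (D * U) := by simp only [Matrix.mul_assoc]
      _ = star U * (Dᴴ * D) * U := by
          rw [hU1, Matrix.mul_one]
          simp only [Matrix.mul_assoc]
  have h1' : W * Wᴴ = star U * (D * Dᴴ) * U := by
    rw [hWc, hW]
    calc star U * D * U * (star U * Dᴴ * U)
        = star U * D * (U * star U) * (Dᴴ * U) := by simp only [Matrix.mul_assoc]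
      _ = star U * (D * Dᴴ) * U := by
          rw [hU1, Matrix.mul_one]
          simp only [Matrix.mul_assoc]
  have E4 : star v ⬝ᵥ v = ∑ k, ∑ l, star (W l k) * W l k := by
    have h2 : trace (Wᴴ * W) = trace (Dᴴ * D) := by
      rw [h1, trace_mul_comm, ← Matrix.mul_assoc, hU1, Matrix.one_mul]
    have h3 : trace (Wᴴ * W) = ∑ k, ∑ l, star (W l k) * W l k := by
      rw [overlap_trace_expand]
      simp only [conjTranspose_apply]
    rw [← h3, h2, hD]
    simp [dotProduct, diagonal_conjTranspose, diagonal_mul_diagonal, trace_diagonal]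
  have E5 : ∀ k, ∑ l, star (W l k) * W l k = ∑ l, star (W k l) * W k l := by
    have hDD : D * Dᴴ = Dᴴ * D := by
      rw [hD]
      simp only [diagonal_conjTranspose, diagonal_mul_diagonal]
      exact congrArg diagonal (funext fun i => mul_comm _ _)
    have hnormal : W * Wᴴ = Wᴴ * W := by rw [h1, h1', hDD]
    intro k
    have hkk := congrFun (congrFun hnormal k) k
    simp only [Matrix.mul_apply, conjTranspose_apply] at hkk
    calc ∑ l, star (W l k) * W l k = ∑ l, W k l * star (W k l) := hkk.symm
      _ = ∑ l, star (W k l) * W k l :=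
          Finset.sum_congr rfl fun l _ => mul_comm _ _
  have cast1 : ∀ z : ℂ, star z * z = ((Complex.normSq z : ℝ) : ℂ) := fun z => by
    rw [mul_comm]; exact Complex.mul_conj z
  have R1 : star v ⬝ᵥ ((Matrix.of fun i j : Fin N => A i j * A⁻¹ j i) *ᵥ v)
      = ((∑ k, ∑ l, (μ k / μ l) * Complex.normSq (W k l) : ℝ) : ℂ) := by
    rw [E1, E2, E3, Finset.sum_comm]
    push_cast
    refine Finset.sum_congr rfl fun k _ => Finset.sum_congr rfl fun l _ => ?_
    rw [cast1]
    ring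
  have R2 : star v ⬝ᵥ v = ((∑ k, ∑ l, Complex.normSq (W k l) : ℝ) : ℂ) := by
    rw [E4, Finset.sum_comm]
    push_cast
    refine Finset.sum_congr rfl fun k _ => Finset.sum_congr rfl fun l _ => ?_
    rw [cast1]
  have R3 : ∀ k, ∑ l, Complex.normSq (W k l) = ∑ l, Complex.normSq (W l k) := by
    intro k
    have h := E5 k
    simp only [cast1] at h
    exact_mod_cast h.symm
  rw [R1, R2]
  have := overlap_real_ineq μ hμpos (fun k l => Complex.normSq (W k l))
    (fun k l => Complex.normSq_nonneg _) R3
  exact_mod_cast this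

/-- The overlap matrix `𝒪_{i,j} = A_{i,j}(A⁻¹)_{j,i}` (Hadamard product of
`A = P*P` and `(Aᵀ)⁻¹`) of a matrix `G = P Δ P⁻¹` with distinct eigenvalues
is Hermitian positive definite, and its smallest eigenvalue equals `1`. -/
theorem overlap_min_eigenvalue {N : ℕ} (hN : 0 < N)
    (G P : Matrix (Fin N) (Fin N) ℂ)
    (lam : Fin N → ℂ) (hP : IsUnit P.det) (hlam : Function.Injective lam)
    (hG : G = P * Matrix.diagonal lam * P⁻¹) :
    ∃ hH : (Matrix.of fun i j : Fin N =>
        (Pᴴ * P) i j * (Pᴴ * P)⁻¹ j i).IsHermitian,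
      (Matrix.of fun i j : Fin N =>
        (Pᴴ * P) i j * (Pᴴ * P)⁻¹ j i).PosDef ∧
      (∀ i : Fin N, 1 ≤ hH.eigenvalues i) ∧
      (∃ i : Fin N, hH.eigenvalues i = 1) := by
  set A : Matrix (Fin N) (Fin N) ℂ := Pᴴ * P with hAdef
  have hApd : A.PosDef := overlap_posdef_A P hP
  set O : Matrix (Fin N) (Fin N) ℂ := Matrix.of fun i j : Fin N => A i j * A⁻¹ j i with hO
  have hquad : ∀ v : Fin N → ℂ, star v ⬝ᵥ v ≤ star v ⬝ᵥ (O *ᵥ v) := overlap_quad A hApd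
  have hHerm : O.IsHermitian := by
    have h1 : A.IsHermitian := hApd.1
    have h2 : (A⁻¹).IsHermitian := h1.inv
    ext i j
    simp only [conjTranspose_apply, hO, of_apply]
    rw [star_mul', h1.apply i j, h2.apply j i, mul_comm]
  have hPD : O.PosDef :=
    PosDef.of_dotProduct_mulVec_pos hHerm fun x hx => lt_of_lt_of_le (dotProduct_star_self_pos_iff.mpr hx) (hquad x)
  refine ⟨hHerm, hPD, ?_, ?_⟩
  · -- all eigenvalues ≥ 1
    have lower : ∀ (b : Fin N → ℂ) (r : ℝ), O *ᵥ b = r • b → star b ⬝ᵥ b = 1 → 1 ≤ r := by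
      intro b r hb hb1
      have h2 : star b ⬝ᵥ (O *ᵥ b) = (r : ℂ) := by
        rw [hb, dotProduct_smul, hb1]
        simp [Complex.real_smul]
      have h := hquad b
      rw [hb1, h2] at h
      exact_mod_cast h
    intro i
    refine lower _ _ (hHerm.mulVec_eigenvectorBasis i) ?_
    have h := orthonormal_iff_ite.mp hHerm.eigenvectorBasis.orthonormal i i
    simp only [if_pos] at h
    rw [EuclideanSpace.inner_eq_star_dotProduct] at h
    rwa [dotProduct_comm] at h
  · -- some eigenvalue = 1
    by_contra hcon
    push_neg at hcon
    set y : Fin N → ℂ := fun _ => 1 with hy0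
    have hy : O *ᵥ y = y := by
      have hone : A * A⁻¹ = 1 :=
        Matrix.mul_nonsing_inv A ((isUnit_iff_isUnit_det A).mp hApd.isUnit)
      funext i
      have h := congrFun (congrFun hone i) i
      simp only [Matrix.mul_apply, Matrix.one_apply_eq] at h
      simp only [mulVec, dotProduct, hO, of_apply, hy0, mul_one]
      exact h
    have upper : ∀ (b : Fin N → ℂ) (r : ℝ), O *ᵥ b = r • b → r ≠ 1 → star b ⬝ᵥ y = 0 := by
      intro b r hb hr
      have h3 : star b ᵥ* O = r • star b := by
        have h4 := congrArg star hb
        rwa [star_mulVec, hHerm.eq, star_smul, star_trivial r] at h4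
      have h2 : star b ⬝ᵥ y = (r : ℂ) * (star b ⬝ᵥ y) := by
        conv_lhs => rw [← hy]
        rw [dotProduct_mulVec, h3, smul_dotProduct, Complex.real_smul]
      have h5 : ((r : ℂ) - 1) * (star b ⬝ᵥ y) = 0 := by
        rw [sub_mul, one_mul, ← h2, sub_self]
      rcases mul_eq_zero.mp h5 with h | h
      · exfalso
        apply hr
        have h6 : (r : ℂ) = 1 := sub_eq_zero.mp h
        exact_mod_cast h6
      · exact h
    have key : ∀ i, star (⇑(hHerm.eigenvectorBasis i)) ⬝ᵥ y = 0 :=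
      fun i => upper _ _ (hHerm.mulVec_eigenvectorBasis i) (hcon i)
    set y' : EuclideanSpace ℂ (Fin N) := (WithLp.equiv 2 (Fin N → ℂ)).symm y with hy'
    have hrepr : ∀ i, hHerm.eigenvectorBasis.repr y' i = 0 := by
      intro i
      rw [OrthonormalBasis.repr_apply_apply, EuclideanSpace.inner_eq_star_dotProduct]
      rw [dotProduct_comm]
      simpa [hy'] using key i
    have hz : y' = 0 := by
      rw [← hHerm.eigenvectorBasis.repr.map_eq_zero_iff]
      ext i
      exact hrepr i
    have hcontr : (1 : ℂ) = 0 := by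
      have h := congrArg (WithLp.equiv 2 (Fin N → ℂ)) hz
      simp only [hy', Equiv.apply_symm_apply] at h
      exact congrFun h ⟨0, hN⟩
    exact one_ne_zero hcontr
end
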